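/- There is a constant C such that every integer-valued random variable N with finite variance satisfies H(N) ≤ C + max(0, log Var(N)), where H(N) is the Shannon entropy of the distribution of N. -/

import Mathlib

set_option maxHeartbeats 1000000

open Real

/-- Shannon entropy of a measure on a countable set. -/
noncomputable def entropy {X : Type*} (μ : X → ℝ) : ℝ := ∑' x, negMulLog (μ x)

/-- Pointwise Gibbs inequality: `-x log x ≤ y - x - x log y`. -/
lemma gibbs_pt {x y : ℝ} (hx : 0 ≤ x) (hy : 0 < y) :
    negMulLog x ≤ y - x + x * (-(Real.log y)) := by
  rcases hx.eq_or_lt with h | h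
  · rw [← h]
    simp [negMulLog]
    positivity
  · have h1 : Real.log (y / x) ≤ y / x - 1 :=
      Real.log_le_sub_one_of_pos (by positivity)
    rw [Real.log_div (ne_of_gt hy) (ne_of_gt h)] at h1
    have h2 : x * (Real.log y - Real.log x) ≤ x * (y / x - 1) :=
      mul_le_mul_of_nonneg_left h1 h.le
    have h3 : x * (y / x - 1) = y - x := by field_simp
    rw [negMulLog]
    nlinarith [h2, h3]

/-- Sum over `ℤ` of `r ^ |k|` for `0 ≤ r < 1`. -/
lemma hasSum_pow_natAbs {r : ℝ} (h0 : 0 ≤ r) (h1 : r < 1) :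
    HasSum (fun k : ℤ => r ^ k.natAbs) ((1 - r)⁻¹ + (1 - r)⁻¹ - 1) := by
  have hgeo : HasSum (fun k : ℕ => r ^ k) (1 - r)⁻¹ := hasSum_geometric_of_lt_one h0 h1
  have ha : HasSum (fun n : ℕ => r ^ (((n : ℤ)).natAbs)) (1 - r)⁻¹ := by
    have he : (fun n : ℕ => r ^ (((n : ℤ)).natAbs)) = fun n : ℕ => r ^ n := by
      funext n; rw [Int.natAbs_natCast]
    rw [he]; exact hgeo
  have hb : HasSum (fun n : ℕ => r ^ (((-(n : ℤ))).natAbs)) (1 - r)⁻¹ := by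
    have he : (fun n : ℕ => r ^ (((-(n : ℤ))).natAbs)) = fun n : ℕ => r ^ n := by
      funext n; rw [Int.natAbs_neg, Int.natAbs_natCast]
    rw [he]; exact hgeo
  have h3 := HasSum.of_nat_of_neg (f := fun k : ℤ => r ^ k.natAbs) ha hb
  have h4 : ((fun k : ℤ => r ^ k.natAbs) 0) = 1 := by norm_num
  rw [show r ^ Int.natAbs 0 = 1 by norm_num] at h3
  exact h3

/-- There is a constant `C` such that every integer-valued random variable `N`
(described by its distribution `p` on `ℤ`) with finite variance satisfies
`H(N) ≤ C + max(0, log Var N)`. -/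
theorem entropy_le_log_variance :
    ∃ C : ℝ, ∀ p : ℤ → ℝ, (∀ n, 0 ≤ p n) → HasSum p 1 →
      (Summable fun n : ℤ => p n * (n : ℝ)) →
      (Summable fun n : ℤ => p n * (n : ℝ) ^ 2) →
      entropy p ≤
        C + max 0 (Real.log (∑' n : ℤ, p n * ((n : ℝ) - ∑' k : ℤ, p k * (k : ℝ)) ^ 2)) := by
  refine ⟨9, fun p hp0 hp1 hs1 hs2 => ?_⟩
  set μ := ∑' k : ℤ, p k * (k : ℝ) with hμ
  set V := ∑' n : ℤ, p n * ((n : ℝ) - μ) ^ 2 with hV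
  have hpsum : Summable p := hp1.summable
  have hwsum : Summable (fun n : ℤ => p n * ((n : ℝ) - μ) ^ 2) := by
    have hrw : (fun n : ℤ => p n * ((n : ℝ) - μ) ^ 2)
        = fun n : ℤ => (p n * (n : ℝ) ^ 2 - (2 * μ) * (p n * (n : ℝ))) + μ ^ 2 * p n := by
      funext n; ring
    rw [hrw]
    exact (hs2.sub (hs1.mul_left _)).add (hpsum.mul_left _)
  have hV0 : 0 ≤ V := tsum_nonneg fun n => by have := hp0 n; positivity
  set t := max 1 V with ht
  have ht1 : (1 : ℝ) ≤ t := le_max_left _ _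
  have ht0 : (0 : ℝ) < t := by linarith
  have hVt : V ≤ t := le_max_right _ _
  set a := 1 / (2 * t) with ha
  have ha0 : 0 < a := by positivity
  have ha1 : a ≤ 1 / 2 := by
    rw [ha]
    rw [div_le_div_iff₀ (by positivity) (by norm_num)]
    linarith
  set r := Real.exp (-a) with hr
  have hr0 : 0 ≤ r := (Real.exp_pos _).le
  have hr1 : r < 1 := by
    rw [hr, Real.exp_lt_one_iff]
    linarith
  have hrsub : a / 2 ≤ 1 - r := by
    rw [hr, Real.exp_neg]
    have hE : a + 1 ≤ Real.exp a := Real.add_one_le_exp a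
    have hEpos : 0 < Real.exp a := Real.exp_pos a
    have hinv : Real.exp a * (Real.exp a)⁻¹ = 1 := mul_inv_cancel₀ (ne_of_gt hEpos)
    nlinarith [hinv, hE, hEpos, ha0, ha1]
  have hr1' : 0 < 1 - r := by nlinarith
  set m := ⌊μ⌋ with hm
  have hmμ : |μ - (m : ℝ)| ≤ 1 := by
    rw [abs_of_nonneg (sub_nonneg.mpr (Int.floor_le μ))]
    have := Int.lt_floor_add_one μ
    linarith
  set q := fun n : ℤ => t⁻¹ * r ^ (n - m).natAbs with hq
  have hqpos : ∀ n, 0 < q n := fun n => by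
    have : 0 < r := Real.exp_pos _
    positivity
  -- sum of q
  have hgeo : HasSum (fun k : ℕ => r ^ k) (1 - r)⁻¹ := hasSum_geometric_of_lt_one hr0 hr1
  have hcenter : HasSum (fun k : ℤ => r ^ k.natAbs) ((1 - r)⁻¹ + (1 - r)⁻¹ - 1) :=
    hasSum_pow_natAbs hr0 hr1
  have hqsum : HasSum q (t⁻¹ * ((1 - r)⁻¹ + (1 - r)⁻¹ - 1)) := by
    have h3 : HasSum (fun n : ℤ => r ^ (n - m).natAbs) ((1 - r)⁻¹ + (1 - r)⁻¹ - 1) := by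
      have := ((Equiv.subRight m).hasSum_iff
        (f := fun k : ℤ => r ^ k.natAbs) (a := (1 - r)⁻¹ + (1 - r)⁻¹ - 1)).mpr hcenter
      simpa [Function.comp_def, Equiv.subRight] using this
    exact h3.mul_left _
  -- the penalty series
  set L := fun n : ℤ => p n * (((n - m).natAbs : ℕ) : ℝ) with hL
  have hLcast : ∀ n : ℤ, (((n - m).natAbs : ℕ) : ℝ) = |(n : ℝ) - (m : ℝ)| := by
    intro n
    rw [Nat.cast_natAbs]
    push_cast
    ring_nf
  have hLle : ∀ n, L n ≤ 3 / 2 * p n + 1 / 2 * (p n * ((n : ℝ) - μ) ^ 2) := by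
    intro n
    rw [hL]
    have h1 : (((n - m).natAbs : ℕ) : ℝ) ≤ 3 / 2 + ((n : ℝ) - μ) ^ 2 / 2 := by
      rw [hLcast n]
      have h2 : |(n : ℝ) - (m : ℝ)| ≤ |(n : ℝ) - μ| + |μ - (m : ℝ)| := by
        have := abs_sub_le ((n : ℝ)) μ ((m : ℝ))
        simpa using this
      have h3 : |(n : ℝ) - μ| ≤ (1 + ((n : ℝ) - μ) ^ 2) / 2 := by
        nlinarith [sq_nonneg (|(n : ℝ) - μ| - 1), sq_abs ((n : ℝ) - μ)]
      linarith
    have := hp0 n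
    nlinarith [h1, this]
  have hLnn : ∀ n, 0 ≤ L n := fun n => by
    have := hp0 n; rw [hL]; positivity
  have hLsum : Summable L :=
    Summable.of_nonneg_of_le hLnn hLle ((hpsum.mul_left _).add (hwsum.mul_left _))
  have hLbound : ∑' n, L n ≤ 3 / 2 + V / 2 := by
    have h1 : ∑' n, L n ≤ ∑' n, (3 / 2 * p n + 1 / 2 * (p n * ((n : ℝ) - μ) ^ 2)) :=
      Summable.tsum_le_tsum hLle hLsum ((hpsum.mul_left _).add (hwsum.mul_left _))
    have h2 : HasSum (fun n : ℤ => 3 / 2 * p n + 1 / 2 * (p n * ((n : ℝ) - μ) ^ 2))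
        (3 / 2 * 1 + 1 / 2 * V) :=
      (hp1.mul_left _).add (hwsum.hasSum.mul_left _)
    rw [h2.tsum_eq] at h1
    linarith
  -- pointwise bound
  set g := fun n : ℤ => q n - p n + (Real.log t * p n + a * L n) with hg
  have hlogq : ∀ n : ℤ, -(Real.log (q n)) = Real.log t + a * (((n - m).natAbs : ℕ) : ℝ) := by
    intro n
    rw [hq]
    have hrpos : (0 : ℝ) < r := Real.exp_pos _
    rw [Real.log_mul (by positivity) (by positivity), Real.log_inv, Real.log_pow, hr,
      Real.log_exp]
    ring
  have hpt : ∀ n, negMulLog (p n) ≤ g n := by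
    intro n
    have h1 := gibbs_pt (hp0 n) (hqpos n)
    rw [hlogq n] at h1
    rw [hg, hL]
    calc negMulLog (p n) ≤ q n - p n + p n * (Real.log t + a * (((n - m).natAbs : ℕ) : ℝ)) := h1
      _ = q n - p n + (Real.log t * p n + a * (p n * (((n - m).natAbs : ℕ) : ℝ))) := by ring
  have hgsum : Summable g :=
    (hqsum.summable.sub hpsum).add ((hpsum.mul_left _).add (hLsum.mul_left _))
  have hnn : ∀ n, 0 ≤ negMulLog (p n) := fun n =>
    Real.negMulLog_nonneg (hp0 n) (le_hasSum hp1 n fun i _ => hp0 i)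
  have hfsum : Summable (fun n : ℤ => negMulLog (p n)) :=
    Summable.of_nonneg_of_le hnn hpt hgsum
  have hmain : entropy p ≤ ∑' n, g n := by
    rw [entropy]
    exact Summable.tsum_le_tsum hpt hfsum hgsum
  have hgsum' : HasSum g (t⁻¹ * ((1 - r)⁻¹ + (1 - r)⁻¹ - 1) - 1
      + (Real.log t * 1 + a * ∑' n, L n)) :=
    (hqsum.sub hp1).add ((hp1.mul_left _).add (hLsum.hasSum.mul_left _))
  rw [hgsum'.tsum_eq] at hmain
  -- numeric bounds
  have hinv : (1 - r)⁻¹ ≤ 4 * t := by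
    have h1 : (1 : ℝ) / (4 * t) ≤ 1 - r := by
      have : a / 2 = 1 / (4 * t) := by rw [ha]; ring
      linarith [hrsub, this.symm.le]
    calc (1 - r)⁻¹ ≤ (1 / (4 * t))⁻¹ := by
          apply inv_anti₀ (by positivity) h1
      _ = 4 * t := by field_simp
  have hq8 : t⁻¹ * ((1 - r)⁻¹ + (1 - r)⁻¹ - 1) ≤ 8 := by
    have hti : 0 < t⁻¹ := by positivity
    have h1 : (1 - r)⁻¹ + (1 - r)⁻¹ - 1 ≤ 8 * t - 1 := by linarith
    have h2 : t⁻¹ * ((1 - r)⁻¹ + (1 - r)⁻¹ - 1) ≤ t⁻¹ * (8 * t - 1) :=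
      mul_le_mul_of_nonneg_left h1 hti.le
    have h3 : t⁻¹ * (8 * t - 1) = 8 - t⁻¹ := by field_simp
    nlinarith [h2, h3, hti]
  have hL1 : a * ∑' n, L n ≤ 1 := by
    have hLnn' : 0 ≤ ∑' n, L n := tsum_nonneg hLnn
    have h1 : a * ∑' n, L n ≤ a * (3 / 2 + V / 2) :=
      mul_le_mul_of_nonneg_left hLbound ha0.le
    have h2 : a * (3 / 2 + V / 2) ≤ 1 := by
      rw [ha]
      rw [div_mul_eq_mul_div, div_le_one (by positivity)]
      nlinarith [hVt, ht1]
    linarith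
  have hlogt : Real.log t = max 0 (Real.log V) := by
    rcases le_or_gt V 1 with h | h
    · have h1 : t = 1 := by rw [ht, max_eq_left h]
      rw [h1, Real.log_one]
      have h2 : Real.log V ≤ 0 := Real.log_nonpos hV0 h
      rw [max_eq_left h2]
    · have h1 : t = V := by rw [ht, max_eq_right h.le]
      rw [h1]
      have h2 : 0 ≤ Real.log V := Real.log_nonneg h.le
      rw [max_eq_right h2]
  rw [← hlogt]
  linarith [hmain, hq8, hL1]
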